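/- Under Assumption 2, ∫_{{y ∈ ℝ^{2k+1} : p(y_{-k}^k) > 0}} ‖P(X_0 | y_{-k}^k) − P̂(X_0 | y_{-k}^k)‖₁ · p(y_{-k}^k) dy_{-k}^k ≤ ε*. (Here p(y_{-k}^k) > 0 implies p(y_{-0}) > 0, so both posterior vectors are defined on the domain of integration.) -/

import Mathlib

open MeasureTheory Finset

noncomputable section
namespace GenCUDE

/-- The center index of a `(2k+1)`-tuple (0-indexed position `k`). -/
def center (k : ℕ) : Fin (2*k+1) := ⟨k, by omega⟩

/-- Remove the center coordinate of a `(2k+1)`-tuple, yielding the context (a `2k`-tuple). -/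
def dropCenter {α : Type*} (k : ℕ) (y : Fin (2*k+1) → α) : Fin (2*k) → α :=
  fun i => y ((center k).succAbove i)

/-- `p(y_{-k}^k)`: the joint output density of the full `(2k+1)`-tuple. -/
def pFull {M k : ℕ} (f : Fin M → ℝ → ℝ) (P : (Fin (2*k+1) → Fin M) → ℝ)
    (y : Fin (2*k+1) → ℝ) : ℝ :=
  ∑ u : Fin (2*k+1) → Fin M, P u * ∏ j, f (u j) (y j)

/-- `p(y_{-0})`: the output density of the context. -/
def pCtx {M k : ℕ} (f : Fin M → ℝ → ℝ) (P : (Fin (2*k+1) → Fin M) → ℝ)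
    (c : Fin (2*k) → ℝ) : ℝ :=
  ∑ u : Fin (2*k+1) → Fin M, P u * ∏ i, f (dropCenter k u i) (c i)

/-- `p(a, y_{-k}^k)`. -/
def pJoint {M k : ℕ} (f : Fin M → ℝ → ℝ) (P : (Fin (2*k+1) → Fin M) → ℝ)
    (a : Fin M) (y : Fin (2*k+1) → ℝ) : ℝ :=
  ∑ u : Fin (2*k+1) → Fin M,
    (if u (center k) = a then P u * ∏ j, f (u j) (y j) else 0)

/-- `p(a, y_{-0})`. -/
def pJointCtx {M k : ℕ} (f : Fin M → ℝ → ℝ) (P : (Fin (2*k+1) → Fin M) → ℝ)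
    (a : Fin M) (c : Fin (2*k) → ℝ) : ℝ :=
  ∑ u : Fin (2*k+1) → Fin M,
    (if u (center k) = a then P u * ∏ i, f (dropCenter k u i) (c i) else 0)

/-- `P(X_0 = · | y_{-k}^k)`. -/
def postFull {M k : ℕ} (f : Fin M → ℝ → ℝ) (P : (Fin (2*k+1) → Fin M) → ℝ)
    (y : Fin (2*k+1) → ℝ) : Fin M → ℝ :=
  fun a => pJoint f P a y / pFull f P y

/-- `P(X_0 = · | y_{-0})`. -/
def postCtx {M k : ℕ} (f : Fin M → ℝ → ℝ) (P : (Fin (2*k+1) → Fin M) → ℝ)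
    (c : Fin (2*k) → ℝ) : Fin M → ℝ :=
  fun a => pJointCtx f P a c / pCtx f P c

/-- `P(Z_0 = · | y_{-0}) = Σ_a P(X_0=a | y_{-0}) Π(a,·)`. -/
def PZ {M k : ℕ} (f : Fin M → ℝ → ℝ) (P : (Fin (2*k+1) → Fin M) → ℝ)
    (Pi : Matrix (Fin M) (Fin M) ℝ) (c : Fin (2*k) → ℝ) : Fin M → ℝ :=
  fun z => ∑ a, postCtx f P c a * Pi a z

/-- The approximate posterior `P̂(X_0 = · | y_{-k}^k)` built from the network output `g`. -/
def postHat {M k : ℕ} (f : Fin M → ℝ → ℝ) (P : (Fin (2*k+1) → Fin M) → ℝ)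
    (Pi : Matrix (Fin M) (Fin M) ℝ) (g : (Fin (2*k) → ℝ) → Fin M → ℝ)
    (y : Fin (2*k+1) → ℝ) : Fin M → ℝ :=
  fun a => (pCtx f P (dropCenter k y) / pFull f P y)
      * (∑ z, g (dropCenter k y) z * Pi⁻¹ z a) * f a (y (center k))

/-- `b` is a Bayes response with respect to (the not necessarily normalized vector) `v`. -/
def IsBayes {M : ℕ} (Λ : Matrix (Fin M) (Fin M) ℝ) (v : Fin M → ℝ) (b : Fin M) : Prop :=
  ∀ c : Fin M, ∑ a, Λ a b * v a ≤ ∑ a, Λ a c * v a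

/-- Single-letter risk `R(h)` of a sliding-window rule `h` under `P ⊗ C`. -/
def risk {M k : ℕ} (f : Fin M → ℝ → ℝ) (P : (Fin (2*k+1) → Fin M) → ℝ)
    (Λ : Matrix (Fin M) (Fin M) ℝ) (h : (Fin (2*k+1) → ℝ) → Fin M) : ℝ :=
  ∑ u : Fin (2*k+1) → Fin M,
    P u * ∫ y : Fin (2*k+1) → ℝ, Λ (u (center k)) (h y) * ∏ j, f (u j) (y j)

/-- Extend a `Fin n`-indexed sequence to `ℕ` by zero. -/
def ext {n : ℕ} (y : Fin n → ℝ) : ℕ → ℝ := fun m => if h : m < n then y ⟨m, h⟩ else 0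

/-- The window `y_{i-k}^{i+k}` (0-indexed center `i`). -/
def window (k : ℕ) (y : ℕ → ℝ) (i : ℕ) : Fin (2*k+1) → ℝ := fun j => y (i - k + j.val)

/-- The empirical distribution of `(2k+1)`-blocks of `x^n` (0-indexed positions `0,…,n-1`). -/
def empDist (M n k : ℕ) (x : ℕ → Fin M) : (Fin (2*k+1) → Fin M) → ℝ :=
  fun u => (((Finset.Ico k (n - k)).filter
      fun i => ∀ j : Fin (2*k+1), x (i - k + j.val) = u j).card : ℝ) / ((n - 2*k : ℕ) : ℝ)

/-- The law of `Y^n`: independent coordinates, `Y_i` with density `f_{x_i}`. -/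
def lawSeq {M : ℕ} (n : ℕ) (f : Fin M → ℝ → ℝ) (x : ℕ → Fin M) : Measure (Fin n → ℝ) :=
  Measure.pi fun i : Fin n => volume.withDensity fun t => ENNReal.ofReal (f (x i.val) t)

/-- The joint law of the `(2k+1)` noisy outputs under `P ⊗ C`. -/
def lawBlock {M k : ℕ} (f : Fin M → ℝ → ℝ) (P : (Fin (2*k+1) → Fin M) → ℝ) :
    Measure (Fin (2*k+1) → ℝ) :=
  ∑ u : Fin (2*k+1) → Fin M, ENNReal.ofReal (P u) •
    Measure.pi fun j => volume.withDensity fun t => ENNReal.ofReal (f (u j) t)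

/-- The average loss of the sliding-window rule `h` on `(x^n, y^n)`. -/
def avgLoss {M : ℕ} (n k : ℕ) (Λ : Matrix (Fin M) (Fin M) ℝ) (x : ℕ → Fin M)
    (h : (Fin (2*k+1) → ℝ) → Fin M) (y : Fin n → ℝ) : ℝ :=
  (((n - 2*k : ℕ) : ℝ))⁻¹ * ∑ i ∈ Finset.Ico k (n - k), Λ (x i) (h (window k (ext y) i))



/-! ### Auxiliary lemmas -/

lemma prod_split {M k : ℕ} (f : Fin M → ℝ → ℝ) (u : Fin (2*k+1) → Fin M)
    (y : Fin (2*k+1) → ℝ) :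
    ∏ j, f (u j) (y j)
      = f (u (center k)) (y (center k)) * ∏ i, f (dropCenter k u i) (dropCenter k y i) := by
  rw [Fin.prod_univ_succAbove (fun j => f (u j) (y j)) (center k)]
  rfl

lemma pJoint_split {M k : ℕ} (f : Fin M → ℝ → ℝ) (P : (Fin (2*k+1) → Fin M) → ℝ)
    (a : Fin M) (y : Fin (2*k+1) → ℝ) :
    pJoint f P a y = pJointCtx f P a (dropCenter k y) * f a (y (center k)) := by
  unfold pJoint pJointCtx
  rw [Finset.sum_mul]
  refine Finset.sum_congr rfl fun u _ => ?_
  split_ifs with h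
  · rw [prod_split, h]; ring
  · ring

lemma pFull_nonneg {M k : ℕ} {f : Fin M → ℝ → ℝ} {P : (Fin (2*k+1) → Fin M) → ℝ}
    (hf : ∀ a t, 0 ≤ f a t) (hP : ∀ u, 0 ≤ P u) (y : Fin (2*k+1) → ℝ) :
    0 ≤ pFull f P y :=
  Finset.sum_nonneg fun u _ => mul_nonneg (hP u) (Finset.prod_nonneg fun _ _ => hf _ _)

lemma pCtx_nonneg {M k : ℕ} {f : Fin M → ℝ → ℝ} {P : (Fin (2*k+1) → Fin M) → ℝ}
    (hf : ∀ a t, 0 ≤ f a t) (hP : ∀ u, 0 ≤ P u) (c : Fin (2*k) → ℝ) :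
    0 ≤ pCtx f P c :=
  Finset.sum_nonneg fun u _ => mul_nonneg (hP u) (Finset.prod_nonneg fun _ _ => hf _ _)

lemma pCtx_pos {M k : ℕ} {f : Fin M → ℝ → ℝ} {P : (Fin (2*k+1) → Fin M) → ℝ}
    (hf : ∀ a t, 0 ≤ f a t) (hP : ∀ u, 0 ≤ P u) {y : Fin (2*k+1) → ℝ}
    (hy : 0 < pFull f P y) : 0 < pCtx f P (dropCenter k y) := by
  obtain ⟨u, -, hu⟩ := Finset.exists_lt_of_sum_lt (by simpa [pFull] using hy :
    ∑ u : Fin (2*k+1) → Fin M, (0:ℝ) < ∑ u : Fin (2*k+1) → Fin M, P u * ∏ j, f (u j) (y j))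
  rw [prod_split] at hu
  have hq : (0:ℝ) ≤ ∏ i, f (dropCenter k u i) (dropCenter k y i) :=
    Finset.prod_nonneg fun _ _ => hf _ _
  have hPu : 0 < P u := by
    rcases (hP u).lt_or_eq with h | h
    · exact h
    · rw [← h, zero_mul] at hu; exact absurd hu (lt_irrefl 0)
  have hprod : 0 < ∏ i, f (dropCenter k u i) (dropCenter k y i) := by
    rcases hq.lt_or_eq with h | h
    · exact h
    · rw [← h, mul_zero, mul_zero] at hu; exact absurd hu (lt_irrefl 0)
  exact Finset.sum_pos' (fun v _ => mul_nonneg (hP v) (Finset.prod_nonneg fun _ _ => hf _ _))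
    ⟨u, Finset.mem_univ u, mul_pos hPu hprod⟩

lemma postCtx_eq {M k : ℕ} {f : Fin M → ℝ → ℝ} {P : (Fin (2*k+1) → Fin M) → ℝ}
    {Pi : Matrix (Fin M) (Fin M) ℝ} (hPi_inv : IsUnit Pi.det)
    (c : Fin (2*k) → ℝ) (a : Fin M) :
    ∑ z, PZ f P Pi c z * Pi⁻¹ z a = postCtx f P c a := by
  have h1 : Pi * Pi⁻¹ = 1 := Matrix.mul_nonsing_inv Pi hPi_inv
  calc ∑ z, PZ f P Pi c z * Pi⁻¹ z a
      = ∑ b, postCtx f P c b * ∑ z, Pi b z * Pi⁻¹ z a := by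
        unfold PZ
        simp_rw [Finset.sum_mul, Finset.mul_sum, mul_assoc]
        rw [Finset.sum_comm]
    _ = ∑ b, postCtx f P c b * (1 : Matrix (Fin M) (Fin M) ℝ) b a := by
        simp_rw [← Matrix.mul_apply, h1]
    _ = postCtx f P c a := by
        simp [Matrix.one_apply]

lemma abs_dot_le {M : ℕ} (d v : Fin M → ℝ) :
    |∑ z, d z * v z| ≤ (∑ z, |d z|) * Real.sqrt (∑ z, (v z)^2) := by
  calc |∑ z, d z * v z| ≤ ∑ z, |d z * v z| := Finset.abs_sum_le_sum_abs _ _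
    _ ≤ ∑ z, |d z| * Real.sqrt (∑ z', (v z')^2) := by
        refine Finset.sum_le_sum fun z _ => ?_
        rw [abs_mul]
        refine mul_le_mul_of_nonneg_left ?_ (abs_nonneg _)
        rw [← Real.sqrt_sq_eq_abs]
        exact Real.sqrt_le_sqrt (Finset.single_le_sum (fun z' _ => sq_nonneg (v z'))
          (Finset.mem_univ z))
    _ = (∑ z, |d z|) * Real.sqrt (∑ z, (v z)^2) := by rw [Finset.sum_mul]

lemma ctx_mul_eq {M k : ℕ} (f : Fin M → ℝ → ℝ) (P : (Fin (2*k+1) → Fin M) → ℝ)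
    (a : Fin M) (y : Fin (2*k+1) → ℝ) :
    pCtx f P (dropCenter k y) * f a (y (center k))
      = ∑ u : Fin (2*k+1) → Fin M,
          P u * ∏ j, f (Function.update u (center k) a j) (y j) := by
  unfold pCtx
  rw [Finset.sum_mul]
  refine Finset.sum_congr rfl fun u _ => ?_
  rw [prod_split f (Function.update u (center k) a) y, Function.update_self]
  have hdc : ∀ i, dropCenter k (Function.update u (center k) a) i = dropCenter k u i := by
    intro i
    unfold dropCenter
    rw [Function.update_of_ne (Fin.succAbove_ne _ _)]
  simp_rw [hdc]
  ring

lemma pointwise_bound {M k : ℕ}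
    {f : Fin M → ℝ → ℝ} {P : (Fin (2*k+1) → Fin M) → ℝ}
    {Pi : Matrix (Fin M) (Fin M) ℝ} {g : (Fin (2*k) → ℝ) → Fin M → ℝ} {ε' : ℝ}
    (hf_nonneg : ∀ a t, 0 ≤ f a t) (hP_nonneg : ∀ u, 0 ≤ P u)
    (hPi_inv : IsUnit Pi.det) (hε' : 0 < ε')
    (hg_approx : ∀ c : Fin (2*k) → ℝ, 0 < pCtx f P c →
      ∑ z, |PZ f P Pi c z - g c z| ≤ ε')
    {y : Fin (2*k+1) → ℝ} (hy : 0 < pFull f P y) :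
    (∑ a, |postFull f P y a - postHat f P Pi g y a|) * pFull f P y
      ≤ ∑ a, (ε' * Real.sqrt (∑ z, (Pi⁻¹ z a)^2))
          * (pCtx f P (dropCenter k y) * f a (y (center k))) := by
  have hc : 0 < pCtx f P (dropCenter k y) := pCtx_pos hf_nonneg hP_nonneg hy
  rw [Finset.sum_mul]
  refine Finset.sum_le_sum fun a _ => ?_
  set c : Fin (2*k) → ℝ := dropCenter k y with hcdef
  set y0 : ℝ := y (center k) with hy0def
  set S : ℝ := ∑ z, (PZ f P Pi c z - g c z) * Pi⁻¹ z a with hSdef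
  have hdiff : postFull f P y a - postHat f P Pi g y a
      = (pCtx f P c * f a y0 / pFull f P y) * S := by
    have h1 : postFull f P y a = pJointCtx f P a c * f a y0 / pFull f P y := by
      unfold postFull
      rw [pJoint_split]
    have h2 : pJointCtx f P a c = postCtx f P c a * pCtx f P c := by
      unfold postCtx
      field_simp
    have h3 : S = postCtx f P c a - ∑ z, g c z * Pi⁻¹ z a := by
      rw [hSdef]
      simp_rw [sub_mul]
      rw [Finset.sum_sub_distrib, postCtx_eq hPi_inv]
    rw [h1, h2, h3]
    unfold postHat
    rw [← hcdef, ← hy0def]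
    ring
  have hfnn : 0 ≤ f a y0 := hf_nonneg a _
  have habs : |postFull f P y a - postHat f P Pi g y a| * pFull f P y
      = pCtx f P c * f a y0 * |S| := by
    rw [hdiff, abs_mul,
      abs_of_nonneg (div_nonneg (mul_nonneg hc.le hfnn) hy.le)]
    field_simp
  rw [habs]
  have hbound : |S| ≤ ε' * Real.sqrt (∑ z, (Pi⁻¹ z a)^2) := by
    calc |S| ≤ (∑ z, |PZ f P Pi c z - g c z|) * Real.sqrt (∑ z, (Pi⁻¹ z a)^2) :=
          abs_dot_le _ _
      _ ≤ ε' * Real.sqrt (∑ z, (Pi⁻¹ z a)^2) :=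
          mul_le_mul_of_nonneg_right (hg_approx c hc) (Real.sqrt_nonneg _)
  calc pCtx f P c * f a y0 * |S|
      ≤ pCtx f P c * f a y0 * (ε' * Real.sqrt (∑ z, (Pi⁻¹ z a)^2)) :=
        mul_le_mul_of_nonneg_left hbound (mul_nonneg hc.le hfnn)
    _ = (ε' * Real.sqrt (∑ z, (Pi⁻¹ z a)^2)) * (pCtx f P c * f a y0) := by ring

/-- Lemma 2 of the paper: under Assumption 2,
`∫_{p(y)>0} ‖P(X_0|y) − P̂(X_0|y)‖₁ · p(y) dy ≤ ε* = ε′ · Σ_a ‖π_a^{-1}‖₂`. -/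
theorem statement3
    (M k : ℕ) (hM : 2 ≤ M) (hk : 1 ≤ k)
    (f : Fin M → ℝ → ℝ) (hf_meas : ∀ a, Measurable (f a))
    (hf_nonneg : ∀ a t, 0 ≤ f a t) (hf_int : ∀ a, ∫ t, f a t = 1)
    (Q : ℝ → Fin M) (hQ : Measurable Q)
    (Pi : Matrix (Fin M) (Fin M) ℝ)
    (hPi : ∀ a z, Pi a z = ∫ t in {s : ℝ | Q s = z}, f a t)
    (hPi_inv : IsUnit Pi.det)
    (P : (Fin (2*k+1) → Fin M) → ℝ)
    (hP_nonneg : ∀ u, 0 ≤ P u) (hP_sum : ∑ u, P u = 1)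
    (g : (Fin (2*k) → ℝ) → Fin M → ℝ) (hg_meas : Measurable g)
    (hg_simplex : ∀ c, (∀ z, 0 ≤ g c z) ∧ ∑ z, g c z = 1)
    (ε' : ℝ) (hε' : 0 < ε')
    (hg_approx : ∀ c : Fin (2*k) → ℝ, 0 < pCtx f P c →
      ∑ z, |PZ f P Pi c z - g c z| ≤ ε') :
    ∫ y in {y : Fin (2*k+1) → ℝ | 0 < pFull f P y},
        (∑ a, |postFull f P y a - postHat f P Pi g y a|) * pFull f P y
      ≤ ε' * ∑ a, Real.sqrt (∑ z, (Pi⁻¹ z a)^2) := by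
  have hfint : ∀ a, Integrable (f a) := by
    intro a
    by_contra h
    have := hf_int a
    rw [integral_undef h] at this
    exact zero_ne_one this
  have hprod_int : ∀ w : Fin (2*k+1) → Fin M,
      Integrable (fun y : Fin (2*k+1) → ℝ => ∏ j, f (w j) (y j)) :=
    fun w => Integrable.fintype_prod (f := fun j t => f (w j) t) (fun j => hfint (w j))
  have hprod_integral : ∀ w : Fin (2*k+1) → Fin M,
      ∫ y : Fin (2*k+1) → ℝ, ∏ j, f (w j) (y j) = 1 := by
    intro w
    rw [MeasureTheory.integral_fintype_prod_volume_eq_prod (fun j t => f (w j) t)]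
    simp [hf_int]
  have hterm : ∀ a : Fin M,
      (fun y : Fin (2*k+1) → ℝ => pCtx f P (dropCenter k y) * f a (y (center k)))
        = fun y => ∑ u : Fin (2*k+1) → Fin M,
            P u * ∏ j, f (Function.update u (center k) a j) (y j) :=
    fun a => funext fun y => ctx_mul_eq f P a y
  have hHa_int : ∀ a : Fin M,
      Integrable (fun y : Fin (2*k+1) → ℝ => pCtx f P (dropCenter k y) * f a (y (center k))) := by
    intro a
    rw [hterm a]
    exact integrable_finset_sum _ fun u _ => (hprod_int _).const_mul _
  have hHa_integral : ∀ a : Fin M,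
      ∫ y : Fin (2*k+1) → ℝ, pCtx f P (dropCenter k y) * f a (y (center k)) = 1 := by
    intro a
    rw [hterm a, integral_finset_sum _ fun u _ => (hprod_int _).const_mul _]
    calc ∑ u : Fin (2*k+1) → Fin M,
          ∫ y : Fin (2*k+1) → ℝ, P u * ∏ j, f (Function.update u (center k) a j) (y j)
        = ∑ u : Fin (2*k+1) → Fin M, P u := by
          refine Finset.sum_congr rfl fun u _ => ?_
          rw [integral_const_mul _ _, hprod_integral, mul_one]
      _ = 1 := hP_sum
  set G : (Fin (2*k+1) → ℝ) → ℝ := fun y =>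
    ∑ a, (ε' * Real.sqrt (∑ z, (Pi⁻¹ z a)^2))
        * (pCtx f P (dropCenter k y) * f a (y (center k))) with hGdef
  have hG_int : Integrable G :=
    integrable_finset_sum _ fun a _ => (hHa_int a).const_mul _
  have hG_nonneg : ∀ y, 0 ≤ G y := fun y =>
    Finset.sum_nonneg fun a _ => mul_nonneg
      (mul_nonneg hε'.le (Real.sqrt_nonneg _))
      (mul_nonneg (pCtx_nonneg hf_nonneg hP_nonneg _) (hf_nonneg a _))
  have hG_integral : ∫ y, G y = ε' * ∑ a, Real.sqrt (∑ z, (Pi⁻¹ z a)^2) := by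
    rw [hGdef, integral_finset_sum _ fun a _ => (hHa_int a).const_mul _]
    rw [Finset.mul_sum]
    refine Finset.sum_congr rfl fun a _ => ?_
    rw [integral_const_mul _ _, hHa_integral, mul_one]
  have hpFull_meas : Measurable (pFull f P) := by
    unfold pFull
    exact Finset.measurable_sum _ fun u _ => (measurable_const.mul
      (Finset.measurable_prod _ fun j _ => (hf_meas _).comp (measurable_pi_apply j)))
  have hSmeas : MeasurableSet {y : Fin (2*k+1) → ℝ | 0 < pFull f P y} :=
    measurableSet_lt measurable_const hpFull_meas
  calc ∫ y in {y : Fin (2*k+1) → ℝ | 0 < pFull f P y},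
        (∑ a, |postFull f P y a - postHat f P Pi g y a|) * pFull f P y
      ≤ ∫ y in {y : Fin (2*k+1) → ℝ | 0 < pFull f P y}, G y := by
        refine integral_mono_of_nonneg (ae_of_all _ fun y => ?_) hG_int.restrict ?_
        · exact mul_nonneg (Finset.sum_nonneg fun a _ => abs_nonneg _)
            (pFull_nonneg hf_nonneg hP_nonneg y)
        · refine (ae_restrict_iff' hSmeas).2 (ae_of_all _ fun y hy => ?_)
          exact pointwise_bound hf_nonneg hP_nonneg hPi_inv hε' hg_approx hy
    _ ≤ ∫ y, G y := setIntegral_le_integral hG_int (ae_of_all _ hG_nonneg)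
    _ = ε' * ∑ a, Real.sqrt (∑ z, (Pi⁻¹ z a)^2) := hG_integral


end GenCUDE
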